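/- arXiv:1705.09391 — 4 statements merged into one kernel-verified Lean document; each statement's English description precedes it below -/
import Mathlib

section
/- Let n > 0 and let α, α', β be finite types with decidable equality. Let x' : Fin n → α', y : Fin n → β, and let π : α' → α be any map, with x = π ∘ x'. Then the permutation-model expectation of empirical mutual information is monotone under the projection: m̂₀(π ∘ x', y) ≤ m̂₀(x', y), i.e., (1/n!)·Σ_{σ ∈ Perm(Fin n)} Î(π ∘ x', y ∘ σ) ≤ (1/n!)·Σ_{σ ∈ Perm(Fin n)} Î(x', y ∘ σ). -/
open Finset

/-- Empirical mutual information between `x : Fin n → α` and `y : Fin n → β`,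
`Î(x,y) = Σ_{v,w} (c(v,w)/n)·log(c(v,w)·n/(a(v)·b(w)))`, terms with `c(v,w)=0` being `0`
(which holds automatically since `c(v,w)/n = 0` then). -/
noncomputable def empMI {n : ℕ} {α β : Type*} [Fintype α] [DecidableEq α]
    [Fintype β] [DecidableEq β] (x : Fin n → α) (y : Fin n → β) : ℝ :=
  ∑ v : α, ∑ w : β,
    (((univ.filter fun t => x t = v ∧ y t = w).card : ℝ) / n) *
      Real.log ((((univ.filter fun t => x t = v ∧ y t = w).card : ℝ) * n) /
        (((univ.filter fun t => x t = v).card : ℝ) *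
          ((univ.filter fun t => y t = w).card : ℝ)))

/-- Permutation-model expectation of the empirical mutual information:
`m̂₀(x,y) = (1/n!)·Σ_{σ ∈ Perm(Fin n)} Î(x, y∘σ)`. -/
noncomputable def permExpMI {n : ℕ} {α β : Type*} [Fintype α] [DecidableEq α]
    [Fintype β] [DecidableEq β] (x : Fin n → α) (y : Fin n → β) : ℝ :=
  (1 / (n.factorial : ℝ)) * ∑ σ : Equiv.Perm (Fin n), empMI x (y ∘ σ)

section AuxForPermExpMI
open Real

/-- Log-sum inequality. -/
lemma logSumIneq {ι : Type*} (s : Finset ι) (c a : ι → ℝ)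
    (hc : ∀ i ∈ s, 0 ≤ c i) (hca : ∀ i ∈ s, c i ≤ a i) :
    (∑ i ∈ s, c i) * Real.log ((∑ i ∈ s, c i) / (∑ i ∈ s, a i)) ≤
      ∑ i ∈ s, c i * Real.log (c i / a i) := by
  classical
  have hza : ∀ i ∈ s, a i = 0 → c i = 0 := fun i hi h =>
    le_antisymm (h ▸ hca i hi) (hc i hi)
  set s' := s.filter fun i => a i ≠ 0 with hs'
  have hC : ∑ i ∈ s', c i = ∑ i ∈ s, c i :=
    Finset.sum_filter_of_ne fun i hi h hai => h (hza i hi hai)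
  have hA : ∑ i ∈ s', a i = ∑ i ∈ s, a i :=
    Finset.sum_filter_of_ne fun i hi h hai => h hai
  have hT : ∑ i ∈ s', c i * Real.log (c i / a i) = ∑ i ∈ s, c i * Real.log (c i / a i) :=
    Finset.sum_filter_of_ne fun i hi h hai => by simp [hza i hi hai] at h
  rw [← hC, ← hA, ← hT]
  have hapos : ∀ i ∈ s', 0 < a i := fun i hi => by
    have := Finset.mem_filter.mp hi
    exact lt_of_le_of_ne ((hc i this.1).trans (hca i this.1)) (Ne.symm this.2)
  rcases eq_or_lt_of_le (Finset.sum_nonneg fun i hi => (hapos i hi).le) with hA0 | hA0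
  · have : s' = ∅ := by
      by_contra h
      obtain ⟨i, hi⟩ := Finset.nonempty_of_ne_empty h
      exact absurd (Finset.sum_pos' (fun j hj => (hapos j hj).le) ⟨i, hi, hapos i hi⟩) (by rw [← hA0]; simp)
    simp [this]
  set A := ∑ i ∈ s', a i with hAdef
  have hJ := Real.convexOn_mul_log.map_sum_le (t := s') (w := fun i => a i / A)
    (p := fun i => c i / a i)
    (fun i hi => div_nonneg (hapos i hi).le hA0.le)
    (by rw [← Finset.sum_div, div_self hA0.ne'])
    (fun i hi => by
      have := hapos i hi
      have := hc i (Finset.mem_filter.mp hi).1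
      exact Set.mem_Ici.mpr (by positivity))
  have h1 : ∑ i ∈ s', (a i / A) • (c i / a i) = (∑ i ∈ s', c i) / A := by
    simp only [smul_eq_mul]
    rw [Finset.sum_div]
    refine Finset.sum_congr rfl fun i hi => ?_
    have hai := (hapos i hi).ne'
    field_simp
  have h2 : ∑ i ∈ s', (a i / A) • ((c i / a i) * Real.log (c i / a i))
      = (∑ i ∈ s', c i * Real.log (c i / a i)) / A := by
    simp only [smul_eq_mul]
    rw [Finset.sum_div]
    refine Finset.sum_congr rfl fun i hi => ?_
    have hai := (hapos i hi).ne'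
    field_simp
  rw [h1] at hJ
  simp only [h2] at hJ
  have := mul_le_mul_of_nonneg_left hJ hA0.le
  calc (∑ i ∈ s', c i) * Real.log ((∑ i ∈ s', c i) / A)
      = A * ((∑ i ∈ s', c i) / A * Real.log ((∑ i ∈ s', c i) / A)) := by
        field_simp
    _ ≤ A * ((∑ i ∈ s', c i * Real.log (c i / a i)) / A) := this
    _ = ∑ i ∈ s', c i * Real.log (c i / a i) := by field_simp

/-- Fiberwise counting. -/
lemma count_fiber {n : ℕ} {α α' : Type*} [Fintype α'] [DecidableEq α] [DecidableEq α']
    (x' : Fin n → α') (pr : α' → α) (P : Fin n → Prop) [DecidablePred P] (v : α) :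
    ∑ v' ∈ univ.filter fun v' => pr v' = v,
      ((univ.filter fun t => x' t = v' ∧ P t).card)
      = (univ.filter fun t => pr (x' t) = v ∧ P t).card := by
  simp only [Finset.card_filter]
  rw [Finset.sum_comm]
  refine Finset.sum_congr rfl fun t _ => ?_
  by_cases hv : pr (x' t) = v
  · rw [Finset.sum_eq_single_of_mem (x' t) (by simp [hv])]
    · simp [hv]
    · intro b hb hne
      rw [if_neg]
      rintro ⟨h1, -⟩
      exact hne h1.symm
  · rw [Finset.sum_eq_zero, if_neg (fun h => hv h.1)]
    intro b hb
    rw [if_neg]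
    rintro ⟨h1, -⟩
    exact hv (h1 ▸ (Finset.mem_filter.mp hb).2)

/-- Core per-cell inequality. -/
lemma coreIneq {ι : Type*} (s : Finset ι) (c a : ι → ℝ) (nn b : ℝ) (hnn : 0 < nn)
    (hc : ∀ i ∈ s, 0 ≤ c i) (hca : ∀ i ∈ s, c i ≤ a i) (hcb : ∀ i ∈ s, c i ≤ b) :
    ((∑ i ∈ s, c i) / nn) * Real.log ((∑ i ∈ s, c i) * nn / ((∑ i ∈ s, a i) * b)) ≤
      ∑ i ∈ s, (c i / nn) * Real.log (c i * nn / (a i * b)) := by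
  by_cases hC : ∑ i ∈ s, c i = 0
  · have h0 : ∀ i ∈ s, c i = 0 := fun i hi =>
      (Finset.sum_eq_zero_iff_of_nonneg hc).mp hC i hi
    rw [hC]
    simp only [zero_div, zero_mul]
    exact (Finset.sum_eq_zero fun i hi => by rw [h0 i hi]; simp).ge
  have hCpos : 0 < ∑ i ∈ s, c i :=
    lt_of_le_of_ne (Finset.sum_nonneg hc) (Ne.symm hC)
  obtain ⟨i0, hi0, hci0⟩ : ∃ i ∈ s, 0 < c i := by
    by_contra h
    push_neg at h
    exact hC (le_antisymm (Finset.sum_nonpos h) (Finset.sum_nonneg hc))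
  have hb : 0 < b := lt_of_lt_of_le hci0 (hcb i0 hi0)
  have hApos : 0 < ∑ i ∈ s, a i := lt_of_lt_of_le hCpos (Finset.sum_le_sum hca)
  have hterm : ∀ i ∈ s, (c i / nn) * Real.log (c i * nn / (a i * b)) =
      (1 / nn) * (c i * Real.log (c i / a i)) + (c i / nn) * Real.log (nn / b) := by
    intro i hi
    rcases eq_or_lt_of_le (hc i hi) with h | h
    · simp [← h]
    · have hai : 0 < a i := lt_of_lt_of_le h (hca i hi)
      rw [Real.log_div (by positivity) (by positivity), Real.log_mul h.ne' hnn.ne',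
          Real.log_mul hai.ne' hb.ne', Real.log_div h.ne' hai.ne',
          Real.log_div hnn.ne' hb.ne']
      ring
  have hL : ((∑ i ∈ s, c i) / nn) * Real.log ((∑ i ∈ s, c i) * nn / ((∑ i ∈ s, a i) * b)) =
      (1 / nn) * ((∑ i ∈ s, c i) * Real.log ((∑ i ∈ s, c i) / (∑ i ∈ s, a i)))
        + ((∑ i ∈ s, c i) / nn) * Real.log (nn / b) := by
    rw [Real.log_div (by positivity) (by positivity), Real.log_mul hCpos.ne' hnn.ne',
        Real.log_mul hApos.ne' hb.ne', Real.log_div hCpos.ne' hApos.ne',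
        Real.log_div hnn.ne' hb.ne']
    ring
  rw [Finset.sum_congr rfl hterm, Finset.sum_add_distrib, hL]
  have h2 : ∑ i ∈ s, (c i / nn) * Real.log (nn / b)
      = ((∑ i ∈ s, c i) / nn) * Real.log (nn / b) := by
    rw [Finset.sum_div, Finset.sum_mul]
  rw [h2, ← Finset.mul_sum]
  exact add_le_add (mul_le_mul_of_nonneg_left
    (logSumIneq s c a hc hca) (by positivity)) le_rfl

lemma empMI_proj_le {n : ℕ} (hn : 0 < n) {α α' β : Type*} [Fintype α] [DecidableEq α]
    [Fintype α'] [DecidableEq α'] [Fintype β] [DecidableEq β]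
    (x' : Fin n → α') (y : Fin n → β) (pr : α' → α) :
    empMI (pr ∘ x') y ≤ empMI x' y := by
  unfold empMI
  simp only [Function.comp_apply]
  conv_rhs => rw [← Finset.sum_fiberwise univ pr]
  refine Finset.sum_le_sum fun v _ => ?_
  rw [Finset.sum_comm]
  refine Finset.sum_le_sum fun w _ => ?_
  have hjoint : ((univ.filter fun t => pr (x' t) = v ∧ y t = w).card : ℝ)
      = ∑ v' ∈ univ.filter fun v' => pr v' = v,
          ((univ.filter fun t => x' t = v' ∧ y t = w).card : ℝ) := by
    rw [← Nat.cast_sum, count_fiber x' pr (fun t => y t = w) v]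
  have hmarg : ((univ.filter fun t => pr (x' t) = v).card : ℝ)
      = ∑ v' ∈ univ.filter fun v' => pr v' = v,
          ((univ.filter fun t => x' t = v').card : ℝ) := by
    rw [← Nat.cast_sum]
    have := count_fiber x' pr (fun _ => True) v
    simp only [and_true] at this
    rw [this]
  rw [hjoint, hmarg]
  refine coreIneq _ _ _ (n : ℝ) _ (by exact_mod_cast hn)
    (fun v' _ => by positivity)
    (fun v' _ => Nat.cast_le.mpr (Finset.card_le_card fun t ht => by
      simp only [Finset.mem_filter] at ht ⊢; exact ⟨ht.1, ht.2.1⟩))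
    (fun v' _ => Nat.cast_le.mpr (Finset.card_le_card fun t ht => by
      simp only [Finset.mem_filter] at ht ⊢; exact ⟨ht.1, ht.2.2⟩))


end AuxForPermExpMI

/-- The permutation-model expectation of empirical mutual information is monotone
under projections of the first argument: `m̂₀(π ∘ x', y) ≤ m̂₀(x', y)`. -/
theorem permExpMI_proj_le {n : ℕ} (hn : 0 < n) {α α' β : Type*}
    [Fintype α] [DecidableEq α] [Fintype α'] [DecidableEq α']
    [Fintype β] [DecidableEq β]
    (x' : Fin n → α') (y : Fin n → β) (pr : α' → α) (x : Fin n → α) (hx : x = pr ∘ x') :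
    permExpMI x y ≤ permExpMI x' y := by
  subst hx
  unfold permExpMI
  refine mul_le_mul_of_nonneg_left ?_ (by positivity)
  exact Finset.sum_le_sum fun σ _ => empMI_proj_le hn x' (y ∘ σ) pr
end

section
/- Let n > 0, let α, β be finite types with decidable equality, and let x : Fin n → α, y : Fin n → β with marginals a(v) = |{t : x t = v}| and b(w) = |{t : y t = w}|. Fix v ∈ α, w ∈ β and a natural number k with k ≤ a(v). Then the number of permutations σ of Fin n with |{t : x t = v ∧ y(σ t) = w}| = k, multiplied by the binomial coefficient C(n, a(v)), equals n! · C(b(w), k) · C(n − b(w), a(v) − k). Equivalently, under a uniformly random permutation σ, the joint cell count c_{vw}(σ) is hypergeometrically distributed with a(v) draws, b(w) total successes, and population size n. -/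
open Finset

variable {n : ℕ}

/-- Permutations mapping `A` onto `S` correspond to pairs of bijections. -/
def permFiberEquiv (A S : Finset (Fin n)) :
    {σ : Equiv.Perm (Fin n) // A.image σ = S} ≃
      (({t // t ∈ A} ≃ {t // t ∈ S}) × ({t // ¬ t ∈ A} ≃ {t // ¬ t ∈ S})) where
  toFun := fun ⟨σ, hσ⟩ => by
    have hmem : ∀ t : Fin n, t ∈ A ↔ σ t ∈ S := by
      intro t
      constructor
      · intro ht; rw [← hσ]; exact Finset.mem_image_of_mem _ ht
      · intro ht
        rw [← hσ] at ht
        obtain ⟨t', ht', h⟩ := Finset.mem_image.1 ht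
        rwa [← σ.injective h]
    exact (σ.subtypeEquiv hmem, σ.subtypeEquiv fun t => not_congr (hmem t))
  invFun e :=
    ⟨(Equiv.sumCompl (· ∈ A)).symm.trans (((e.1.sumCongr e.2)).trans
      (Equiv.sumCompl (· ∈ S))), by
      set f := (Equiv.sumCompl (· ∈ A)).symm.trans (((e.1.sumCongr e.2)).trans
        (Equiv.sumCompl (· ∈ S))) with hf
      have hpos : ∀ (t : Fin n) (ht : t ∈ A), f t = (e.1 ⟨t, ht⟩ : Fin n) := by
        intro t ht
        simp [hf, Equiv.sumCompl_symm_apply_of_pos ht]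
      have hneg : ∀ (t : Fin n) (ht : ¬ t ∈ A), f t = (e.2 ⟨t, ht⟩ : Fin n) := by
        intro t ht
        simp [hf, Equiv.sumCompl_symm_apply_of_neg ht]
      have hmem : ∀ t : Fin n, t ∈ A ↔ f t ∈ S := by
        intro t
        by_cases ht : t ∈ A
        · simp [ht, hpos t ht, (e.1 ⟨t, ht⟩).2]
        · simp [ht, hneg t ht, (e.2 ⟨t, ht⟩).2]
      ext u
      simp only [Finset.mem_image]
      constructor
      · rintro ⟨t, ht, rfl⟩; exact (hmem t).1 ht
      · intro hu
        exact ⟨f.symm u, (hmem _).2 (by simpa using hu), by simp⟩⟩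
  left_inv σ := by
    apply Subtype.ext
    apply Equiv.ext
    intro t
    by_cases ht : t ∈ A
    · simp [Equiv.sumCompl_symm_apply_of_pos ht]
    · simp [Equiv.sumCompl_symm_apply_of_neg ht]
  right_inv e := by
    refine Prod.ext ?_ ?_ <;> apply Equiv.ext <;> rintro ⟨t, ht⟩ <;>
      apply Subtype.ext
    · simp [Equiv.sumCompl_symm_apply_of_pos ht]
    · simp [Equiv.sumCompl_symm_apply_of_neg ht]

lemma permFiber_card (A S : Finset (Fin n)) (hcard : S.card = A.card) :
    (univ.filter fun σ : Equiv.Perm (Fin n) => A.image σ = S).card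
      = A.card.factorial * (n - A.card).factorial := by
  rw [← Fintype.card_subtype]
  rw [Fintype.card_congr (permFiberEquiv A S), Fintype.card_prod]
  have h1 : Fintype.card {t // t ∈ A} = A.card := Fintype.card_coe A
  have h2 : Fintype.card {t // t ∈ S} = A.card := by rw [Fintype.card_coe]; exact hcard
  have e1 : {t // t ∈ A} ≃ {t // t ∈ S} := Fintype.equivOfCardEq (h1.trans h2.symm)
  have e2 : {t : Fin n // ¬ t ∈ A} ≃ {t : Fin n // ¬ t ∈ S} := by
    refine Fintype.equivOfCardEq ?_
    rw [Fintype.card_subtype_compl, Fintype.card_subtype_compl, h1, h2]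
  rw [Fintype.card_equiv e1, Fintype.card_equiv e2, h1,
    Fintype.card_subtype_compl, h1, Fintype.card_fin]


lemma subsets_inter_card (B : Finset (Fin n)) (a k : ℕ) (hk : k ≤ a) :
    ((univ.powersetCard a).filter fun S => (S ∩ B).card = k).card
      = B.card.choose k * (n - B.card).choose (a - k) := by
  rw [show B.card.choose k * (n - B.card).choose (a - k)
      = ((B.powersetCard k) ×ˢ (Bᶜ.powersetCard (a - k))).card by
    rw [Finset.card_product, Finset.card_powersetCard, Finset.card_powersetCard,
      Finset.card_compl, Fintype.card_fin]]
  apply Finset.card_bij' (fun S _ => (S ∩ B, S \ B)) (fun P _ => P.1 ∪ P.2)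
  · rintro S hS
    simp only [Finset.mem_filter, Finset.mem_powersetCard] at hS
    obtain ⟨⟨-, hSa⟩, hSk⟩ := hS
    simp only [Finset.mem_product, Finset.mem_powersetCard]
    refine ⟨⟨Finset.inter_subset_right, hSk⟩, ?_, ?_⟩
    · intro u hu
      simp only [Finset.mem_sdiff] at hu
      simpa using hu.2
    · have := Finset.card_inter_add_card_sdiff S B
      omega
  · rintro ⟨P, Q⟩ hPQ
    simp only [Finset.mem_product, Finset.mem_powersetCard] at hPQ
    obtain ⟨⟨hPB, hPk⟩, hQB, hQk⟩ := hPQ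
    have hdisj : Disjoint P Q := by
      refine Finset.disjoint_left.2 fun u hu hu' => ?_
      have := hQB hu'
      simp only [Finset.mem_compl] at this
      exact this (hPB hu)
    have hPQB : (P ∪ Q) ∩ B = P := by
      ext u
      simp only [Finset.mem_inter, Finset.mem_union]
      constructor
      · rintro ⟨hu | hu, huB⟩
        · exact hu
        · exact absurd huB (by simpa using hQB hu)
      · intro hu; exact ⟨Or.inl hu, hPB hu⟩
    simp only [Finset.mem_filter, Finset.mem_powersetCard]
    refine ⟨⟨Finset.subset_univ _, ?_⟩, by rw [hPQB, hPk]⟩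
    rw [Finset.card_union_of_disjoint hdisj, hPk, hQk]
    omega
  · intro S hS
    ext u
    simp only [Finset.mem_union, Finset.mem_inter, Finset.mem_sdiff]
    tauto
  · rintro ⟨P, Q⟩ hPQ
    simp only [Finset.mem_product, Finset.mem_powersetCard] at hPQ
    obtain ⟨⟨hPB, hPk⟩, hQB, hQk⟩ := hPQ
    have hQB' : ∀ u ∈ Q, u ∉ B := fun u hu => by simpa using hQB hu
    refine Prod.ext ?_ ?_ <;> ext u <;>
      simp only [Finset.mem_inter, Finset.mem_union, Finset.mem_sdiff]
    · constructor
      · rintro ⟨hu | hu, huB⟩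
        · exact hu
        · exact absurd huB (hQB' u hu)
      · intro hu; exact ⟨Or.inl hu, hPB hu⟩
    · constructor
      · rintro ⟨hu | hu, huB⟩
        · exact absurd (hPB hu) huB
        · exact hu
      · intro hu; exact ⟨Or.inr hu, hQB' u hu⟩

lemma count_perms (A B : Finset (Fin n)) (k : ℕ) (hk : k ≤ A.card) :
    (univ.filter fun σ : Equiv.Perm (Fin n) =>
        (A.filter fun t => σ t ∈ B).card = k).card
      = (B.card.choose k * (n - B.card).choose (A.card - k))
        * (A.card.factorial * (n - A.card).factorial) := by
  have himg : ∀ σ : Equiv.Perm (Fin n),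
      (A.filter fun t => σ t ∈ B).card = ((A.image σ) ∩ B).card := by
    intro σ
    rw [show (A.image σ) ∩ B = (A.filter fun t => σ t ∈ B).image σ by
      ext u
      simp only [Finset.mem_inter, Finset.mem_image, Finset.mem_filter]
      constructor
      · rintro ⟨⟨t, ht, rfl⟩, hu⟩; exact ⟨t, ⟨ht, hu⟩, rfl⟩
      · rintro ⟨t, ⟨ht, htB⟩, rfl⟩; exact ⟨⟨t, ht, rfl⟩, htB⟩]
    rw [Finset.card_image_of_injective _ σ.injective]
  have hpred : (univ.filter fun σ : Equiv.Perm (Fin n) =>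
      (A.filter fun t => σ t ∈ B).card = k)
      = univ.filter fun σ : Equiv.Perm (Fin n) => ((A.image σ) ∩ B).card = k := by
    apply Finset.filter_congr; intro σ _; rw [himg σ]
  rw [hpred]
  set T := (univ.powersetCard A.card).filter fun S : Finset (Fin n) => (S ∩ B).card = k
    with hT
  rw [Finset.card_eq_sum_card_fiberwise (f := fun σ : Equiv.Perm (Fin n) => A.image ⇑σ)
    (t := T) (fun σ hσ => by
      simp only [Finset.mem_coe, Finset.mem_filter, Finset.mem_univ, true_and] at hσ
      simp only [Finset.mem_coe, hT, Finset.mem_filter, Finset.mem_powersetCard]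
      exact ⟨⟨Finset.subset_univ _,
        Finset.card_image_of_injective _ σ.injective⟩, hσ⟩)]
  have hterm : ∀ S ∈ T,
      (((univ.filter fun σ : Equiv.Perm (Fin n) => ((A.image σ) ∩ B).card = k).filter
        fun σ : Equiv.Perm (Fin n) => A.image ⇑σ = S)).card = A.card.factorial * (n - A.card).factorial := by
    intro S hS
    simp only [hT, Finset.mem_filter, Finset.mem_powersetCard] at hS
    rw [Finset.filter_filter]
    rw [show (univ.filter fun σ : Equiv.Perm (Fin n) =>
        ((A.image ⇑σ) ∩ B).card = k ∧ A.image ⇑σ = S)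
        = univ.filter fun σ : Equiv.Perm (Fin n) => A.image ⇑σ = S from
      Finset.filter_congr fun σ _ => ⟨And.right, fun h => ⟨by rw [h, hS.2], h⟩⟩]
    exact permFiber_card A S hS.1.2
  rw [Finset.sum_congr rfl hterm, Finset.sum_const, smul_eq_mul]
  rw [show T.card = B.card.choose k * (n - B.card).choose (A.card - k) from
    subsets_inter_card B A.card k hk]

/-- Under a uniformly random permutation `σ` of `Fin n`, the joint cell count
`c_{vw}(σ) = |{t : x t = v ∧ y (σ t) = w}|` is hypergeometrically distributed with `a(v)`
draws, `b(w)` total successes, and population size `n`: the number of permutations with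
cell count `k`, times `C(n, a(v))`, equals `n! · C(b(w), k) · C(n − b(w), a(v) − k)`. -/
theorem card_perms_cell_count_eq_hypergeom {n : ℕ} (hn : 0 < n) {α β : Type*}
    [Fintype α] [DecidableEq α] [Fintype β] [DecidableEq β]
    (x : Fin n → α) (y : Fin n → β) (v : α) (w : β) (k : ℕ)
    (hk : k ≤ (univ.filter fun t => x t = v).card) :
    (univ.filter fun σ : Equiv.Perm (Fin n) =>
        (univ.filter fun t => x t = v ∧ y (σ t) = w).card = k).card *
      Nat.choose n (univ.filter fun t => x t = v).card =
    n.factorial * Nat.choose (univ.filter fun t => y t = w).card k *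
      Nat.choose (n - (univ.filter fun t => y t = w).card)
        ((univ.filter fun t => x t = v).card - k) := by
  set A := univ.filter fun t => x t = v with hA
  set B := univ.filter fun t => y t = w with hB
  have hcell : ∀ σ : Equiv.Perm (Fin n),
      (univ.filter fun t => x t = v ∧ y (σ t) = w) = A.filter fun t => σ t ∈ B := by
    intro σ
    ext t
    simp [hA, hB, Finset.mem_filter]
  have h1 : (univ.filter fun σ : Equiv.Perm (Fin n) =>
      (univ.filter fun t => x t = v ∧ y (σ t) = w).card = k)
      = univ.filter fun σ : Equiv.Perm (Fin n) =>
        (A.filter fun t => σ t ∈ B).card = k := by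
    apply Finset.filter_congr; intro σ _; rw [hcell σ]
  rw [h1, count_perms A B k hk]
  have hAn : A.card ≤ n := by
    simpa using Finset.card_le_card (Finset.subset_univ A)
  rw [← Nat.choose_mul_factorial_mul_factorial hAn]
  ring
end

section
/- Let n > 0, let α, β be finite types with decidable equality, and let x : Fin n → α, y : Fin n → β with marginals a(v) = |{t : x t = v}| and b(w) = |{t : y t = w}|. Then the permutation-model expectation of the empirical mutual information has the closed form m̂₀(x,y) = Σ_{v∈α} Σ_{w∈β} Σ_{k = max(0, a(v)+b(w)−n)}^{min(a(v), b(w))} h(k; a(v), b(w), n) · (k/n) · log(k·n/(a(v)·b(w))), where h(k; a, b, n) = C(b,k)·C(n−b, a−k)/C(n,a) is the hypergeometric probability mass function and terms with k = 0 are taken to be 0. -/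
open Finset

/-- Marginal counts `a(v) = |{t : x t = v}|`. -/
def margCount {n : ℕ} {α : Type*} [Fintype α] [DecidableEq α] (x : Fin n → α) (v : α) : ℕ :=
  (univ.filter fun t => x t = v).card

lemma subtypeCongr_pos {α} {p q : α → Prop} [DecidablePred p] [DecidablePred q]
    (e : { x // p x } ≃ { x // q x }) (f : { x // ¬p x } ≃ { x // ¬q x })
    {a : α} (h : p a) : e.subtypeCongr f a = e ⟨a, h⟩ := by
  simp [Equiv.subtypeCongr, h]

lemma subtypeCongr_neg {α} {p q : α → Prop} [DecidablePred p] [DecidablePred q]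
    (e : { x // p x } ≃ { x // q x }) (f : { x // ¬p x } ≃ { x // ¬q x })
    {a : α} (h : ¬ p a) : e.subtypeCongr f a = f ⟨a, h⟩ := by
  simp [Equiv.subtypeCongr, h]

lemma perm_fiber_card {n : ℕ} (A S : Finset (Fin n)) (hAS : S.card = A.card) :
    (univ.filter fun σ : Equiv.Perm (Fin n) => A.image σ = S).card
      = A.card.factorial * (n - A.card).factorial := by
  have key : ∀ σ : Equiv.Perm (Fin n), A.image σ = S ↔ ∀ t, t ∈ A ↔ σ t ∈ S := by
    intro σ
    constructor
    · intro hS t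
      rw [← hS, Finset.mem_image]
      exact ⟨fun ht => ⟨t, ht, rfl⟩, fun ⟨u, hu, he⟩ => σ.injective he ▸ hu⟩
    · intro h'
      ext s
      rw [Finset.mem_image]
      constructor
      · rintro ⟨t, ht, rfl⟩; exact (h' t).1 ht
      · intro hs
        exact ⟨σ.symm s, (h' _).2 (by simpa using hs), by simp⟩
  classical
  have E : {σ : Equiv.Perm (Fin n) // ∀ t, t ∈ A ↔ σ t ∈ S} ≃
      (({t : Fin n // t ∈ A} ≃ {t : Fin n // t ∈ S}) ×
       ({t : Fin n // ¬ t ∈ A} ≃ {t : Fin n // ¬ t ∈ S})) :=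
    { toFun := fun σh => (σh.1.subtypeEquiv σh.2, σh.1.subtypeEquiv fun t => not_congr (σh.2 t))
      invFun := fun ef => ⟨Equiv.subtypeCongr ef.1 ef.2, by
        intro t
        by_cases ht : t ∈ A
        · rw [subtypeCongr_pos ef.1 ef.2 ht]
          exact ⟨fun _ => (ef.1 ⟨t, ht⟩).2, fun _ => ht⟩
        · rw [subtypeCongr_neg ef.1 ef.2 ht]
          exact ⟨fun h => absurd h ht, fun h => absurd h (ef.2 ⟨t, ht⟩).2⟩⟩
      left_inv := by
        rintro ⟨σ, h⟩
        ext t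
        by_cases ht : t ∈ A
        · rw [subtypeCongr_pos _ _ ht]; rfl
        · rw [subtypeCongr_neg _ _ ht]; rfl
      right_inv := by
        rintro ⟨e, f⟩
        refine Prod.ext ?_ ?_
        · ext t
          simp only [Equiv.subtypeEquiv_apply]
          rw [subtypeCongr_pos e f t.2]
        · ext t
          simp only [Equiv.subtypeEquiv_apply]
          rw [subtypeCongr_neg e f t.2] }
  have h1 : (univ.filter fun σ : Equiv.Perm (Fin n) => A.image σ = S).card
      = Fintype.card {σ : Equiv.Perm (Fin n) // ∀ t, t ∈ A ↔ σ t ∈ S} := by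
    rw [Fintype.card_subtype]
    apply Finset.card_bij (fun σ _ => σ) <;> simp [key]
  rw [h1, Fintype.card_congr E, Fintype.card_prod]
  have c1 : Fintype.card {t : Fin n // t ∈ A} = A.card := Fintype.card_coe A
  have c2 : Fintype.card {t : Fin n // t ∈ S} = A.card := by rw [Fintype.card_coe]; exact hAS
  have c3 : Fintype.card {t : Fin n // ¬ t ∈ A} = n - A.card := by
    rw [Fintype.card_subtype_compl, c1, Fintype.card_fin]
  have c4 : Fintype.card {t : Fin n // ¬ t ∈ S} = n - A.card := by
    rw [Fintype.card_subtype_compl, c2, Fintype.card_fin]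
  rw [Fintype.card_equiv (Fintype.equivOfCardEq (c1.trans c2.symm)),
    Fintype.card_equiv (Fintype.equivOfCardEq (c3.trans c4.symm)), c1, c3]


lemma count_subsets {n : ℕ} (B : Finset (Fin n)) (a k : ℕ) (hk : k ≤ a) :
    ((Finset.powersetCard a (univ : Finset (Fin n))).filter fun S => (S ∩ B).card = k).card
      = B.card.choose k * (n - B.card).choose (a - k) := by
  have htarget : B.card.choose k * (n - B.card).choose (a - k)
      = ((Finset.powersetCard k B) ×ˢ (Finset.powersetCard (a - k) (univ \ B))).card := by
    rw [Finset.card_product, Finset.card_powersetCard, Finset.card_powersetCard,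
      card_sdiff_of_subset (subset_univ B), card_univ, Fintype.card_fin]
  rw [htarget]
  apply Finset.card_bij' (i := fun S _ => (S ∩ B, S \ B)) (j := fun P _ => P.1 ∪ P.2)
  · intro S hS
    simp only [mem_filter, Finset.mem_powersetCard] at hS
    obtain ⟨⟨_, hcard⟩, hk'⟩ := hS
    have hsum : (S ∩ B).card + (S \ B).card = S.card := Finset.card_inter_add_card_sdiff S B
    simp only [Finset.mem_product, Finset.mem_powersetCard]
    refine ⟨⟨inter_subset_right, hk'⟩, ⟨sdiff_subset_sdiff (subset_univ S) (Finset.Subset.refl B), ?_⟩⟩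
    omega
  · intro P hP
    simp only [Finset.mem_product, Finset.mem_powersetCard] at hP
    obtain ⟨⟨hTB, hTk⟩, ⟨hU, hUk⟩⟩ := hP
    have hdisj : Disjoint P.1 P.2 := by
      refine Finset.disjoint_left.mpr fun t ht ht' => ?_
      exact (Finset.mem_sdiff.mp (hU ht')).2 (hTB ht)
    have hUB : Disjoint P.2 B := by
      refine Finset.disjoint_left.mpr fun t ht htB => ?_
      exact (Finset.mem_sdiff.mp (hU ht)).2 htB
    have hinter : (P.1 ∪ P.2) ∩ B = P.1 := by
      rw [Finset.union_inter_distrib_right, Finset.inter_eq_left.mpr hTB,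
        (Finset.disjoint_iff_inter_eq_empty.mp hUB), union_empty]
    simp only [mem_filter, Finset.mem_powersetCard]
    refine ⟨⟨subset_univ _, ?_⟩, by rw [hinter, hTk]⟩
    rw [Finset.card_union_of_disjoint hdisj, hTk, hUk]
    omega
  · intro S hS
    rw [Finset.union_comm]; exact Finset.sdiff_union_inter S B
  · intro P hP
    simp only [Finset.mem_product, Finset.mem_powersetCard] at hP
    obtain ⟨⟨hTB, hTk⟩, ⟨hU, hUk⟩⟩ := hP
    have hUB : Disjoint P.2 B := by
      refine Finset.disjoint_left.mpr fun t ht htB => ?_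
      exact (Finset.mem_sdiff.mp (hU ht)).2 htB
    have hinter : (P.1 ∪ P.2) ∩ B = P.1 := by
      rw [Finset.union_inter_distrib_right, Finset.inter_eq_left.mpr hTB,
        (Finset.disjoint_iff_inter_eq_empty.mp hUB), union_empty]
    have hsd : (P.1 ∪ P.2) \ B = P.2 := by
      rw [Finset.union_sdiff_distrib, Finset.sdiff_eq_empty_iff_subset.mpr hTB,
        Finset.sdiff_eq_self_of_disjoint hUB, empty_union]
    rw [Prod.ext_iff]
    exact ⟨hinter, hsd⟩

lemma marg_inv {n : ℕ} {β : Type*} [DecidableEq β] (y : Fin n → β) (w : β)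
    (σ : Equiv.Perm (Fin n)) :
    (univ.filter fun t => y (σ t) = w).card = (univ.filter fun t => y t = w).card := by
  apply Finset.card_bij' (i := fun t _ => σ t) (j := fun s _ => σ.symm s) <;>
    intro t ht <;> simp_all

lemma count_eq {n : ℕ} {α β : Type*} [DecidableEq α] [DecidableEq β]
    (x : Fin n → α) (y : Fin n → β) (v : α) (w : β) (σ : Equiv.Perm (Fin n)) :
    (univ.filter fun t => x t = v ∧ y (σ t) = w).card
      = (((univ.filter fun t => x t = v).image σ) ∩ (univ.filter fun t => y t = w)).card := by
  apply Finset.card_bij' (i := fun t _ => σ t) (j := fun s _ => σ.symm s)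
  · intro t ht
    simp only [mem_filter, mem_univ, true_and] at ht
    simp only [Finset.mem_inter, Finset.mem_image, mem_filter, mem_univ, true_and]
    exact ⟨⟨t, ht.1, rfl⟩, ht.2⟩
  · intro s hs
    simp only [Finset.mem_inter, Finset.mem_image, mem_filter, mem_univ, true_and] at hs
    obtain ⟨⟨t, htv, rfl⟩, hsw⟩ := hs
    simp only [mem_filter, mem_univ, true_and, Equiv.symm_apply_apply]
    exact ⟨htv, by simpa using hsw⟩
  · intro t _; simp
  · intro s _; simp

lemma permMI_inner_sum {n : ℕ} (hn : 0 < n) {α β : Type*} [Fintype α] [DecidableEq α]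
    [Fintype β] [DecidableEq β] (x : Fin n → α) (y : Fin n → β) (v : α) (w : β) :
    (1 / (n.factorial : ℝ)) * ∑ σ : Equiv.Perm (Fin n),
      (((univ.filter fun t => x t = v ∧ y (σ t) = w).card : ℝ) / n) *
        Real.log ((((univ.filter fun t => x t = v ∧ y (σ t) = w).card : ℝ) * n) /
          (((univ.filter fun t => x t = v).card : ℝ) *
            ((univ.filter fun t => y (σ t) = w).card : ℝ)))
    = ∑ k ∈ Finset.Icc ((univ.filter fun t => x t = v).card
          + (univ.filter fun t => y t = w).card - n)
        (min ((univ.filter fun t => x t = v).card) ((univ.filter fun t => y t = w).card)),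
        ((Nat.choose ((univ.filter fun t => y t = w).card) k *
            Nat.choose (n - (univ.filter fun t => y t = w).card)
              ((univ.filter fun t => x t = v).card - k) : ℝ) /
          (Nat.choose n ((univ.filter fun t => x t = v).card) : ℝ)) *
          ((k : ℝ) / n) *
          Real.log (((k : ℝ) * n) /
            (((univ.filter fun t => x t = v).card : ℝ) *
              ((univ.filter fun t => y t = w).card : ℝ))) := by
  classical
  set A : Finset (Fin n) := univ.filter fun t => x t = v with hA
  set B : Finset (Fin n) := univ.filter fun t => y t = w with hB
  set a := A.card with ha
  set b := B.card with hb
  have han : a ≤ n := by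
    calc a ≤ (univ : Finset (Fin n)).card := Finset.card_le_card (subset_univ A)
    _ = n := by simp
  -- abbreviate the real-valued summand as a function of the count
  set g : ℕ → ℝ := fun m => ((m : ℝ) / n) * Real.log (((m : ℝ) * n) / ((a : ℝ) * (b : ℝ)))
    with hg
  have step0 : ∀ σ : Equiv.Perm (Fin n),
      (((univ.filter fun t => x t = v ∧ y (σ t) = w).card : ℝ) / n) *
        Real.log ((((univ.filter fun t => x t = v ∧ y (σ t) = w).card : ℝ) * n) /
          (((univ.filter fun t => x t = v).card : ℝ) *
            ((univ.filter fun t => y (σ t) = w).card : ℝ)))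
      = g ((A.image σ ∩ B).card) := by
    intro σ
    rw [count_eq x y v w σ, marg_inv y w σ]
  rw [Finset.sum_congr rfl fun σ _ => step0 σ]
  -- fiberwise over S = A.image σ
  have maps1 : ∀ σ : Equiv.Perm (Fin n), σ ∈ (univ : Finset (Equiv.Perm (Fin n))) →
      A.image σ ∈ Finset.powersetCard a (univ : Finset (Fin n)) := by
    intro σ _
    rw [Finset.mem_powersetCard]
    exact ⟨subset_univ _, by rw [Finset.card_image_of_injective _ σ.injective]⟩
  rw [← Finset.sum_fiberwise_of_maps_to maps1]
  have step1 : ∀ S ∈ Finset.powersetCard a (univ : Finset (Fin n)),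
      (∑ σ ∈ univ.filter fun σ : Equiv.Perm (Fin n) => A.image σ = S,
        g ((A.image σ ∩ B).card))
      = ((a.factorial * (n - a).factorial : ℕ) : ℝ) * g ((S ∩ B).card) := by
    intro S hS
    rw [Finset.sum_congr rfl (fun σ hσ => by
      rw [(Finset.mem_filter.mp hσ).2]), Finset.sum_const,
      perm_fiber_card A S (Finset.mem_powersetCard.mp hS).2, nsmul_eq_mul]
  rw [Finset.sum_congr rfl step1]
  -- fiberwise over k = (S ∩ B).card
  have maps2 : ∀ S ∈ Finset.powersetCard a (univ : Finset (Fin n)),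
      (S ∩ B).card ∈ Finset.Icc (a + b - n) (min a b) := by
    intro S hS
    obtain ⟨-, hSa⟩ := Finset.mem_powersetCard.mp hS
    have h1 : (S ∩ B).card ≤ S.card := Finset.card_le_card Finset.inter_subset_left
    have h2 : (S ∩ B).card ≤ b := Finset.card_le_card Finset.inter_subset_right
    have h3 : (S ∪ B).card + (S ∩ B).card = S.card + b := Finset.card_union_add_card_inter S B
    have h4 : (S ∪ B).card ≤ n := by
      calc (S ∪ B).card ≤ (univ : Finset (Fin n)).card := Finset.card_le_card (subset_univ _)
      _ = n := by simp
    rw [Finset.mem_Icc]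
    omega
  rw [← Finset.sum_fiberwise_of_maps_to maps2]
  have step2 : ∀ k ∈ Finset.Icc (a + b - n) (min a b),
      (∑ S ∈ (Finset.powersetCard a (univ : Finset (Fin n))).filter
          fun S => (S ∩ B).card = k,
        ((a.factorial * (n - a).factorial : ℕ) : ℝ) * g ((S ∩ B).card))
      = ((b.choose k * (n - b).choose (a - k) : ℕ) : ℝ) *
          ((a.factorial * (n - a).factorial : ℕ) : ℝ) * g k := by
    intro k hk
    have hka : k ≤ a := le_trans (Finset.mem_Icc.mp hk).2 (min_le_left a b)
    rw [Finset.sum_congr rfl (fun S hS => by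
      rw [(Finset.mem_filter.mp hS).2]), Finset.sum_const,
      count_subsets B a k hka, nsmul_eq_mul]
    ring
  rw [Finset.sum_congr rfl step2, Finset.mul_sum]
  apply Finset.sum_congr rfl
  intro k hk
  -- arithmetic
  have hfact : (n.choose a) * (a.factorial * (n - a).factorial) = n.factorial := by
    rw [← Nat.mul_assoc]; exact Nat.choose_mul_factorial_mul_factorial han
  have hpos : 0 < (n.choose a : ℝ) := by
    exact_mod_cast Nat.choose_pos han
  have hfpos : 0 < ((a.factorial * (n - a).factorial : ℕ) : ℝ) := by
    positivity
  rw [hg]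
  push_cast
  have hnf : (n.factorial : ℝ) = (n.choose a : ℝ) * ((a.factorial : ℝ) * ((n - a).factorial : ℝ)) := by
    exact_mod_cast hfact.symm
  rw [hnf]
  field_simp

/-- Closed form of the permutation-model expectation of the empirical mutual information:
`m̂₀(x,y) = Σ_v Σ_w Σ_{k=max(0,a(v)+b(w)−n)}^{min(a(v),b(w))}
  h(k; a(v), b(w), n) · (k/n) · log(k·n/(a(v)·b(w)))`,
where `h(k; a, b, n) = C(b,k)·C(n−b,a−k)/C(n,a)` is the hypergeometric pmf.
(In `ℕ`, truncated subtraction gives `a(v)+b(w)−n = max(0, a(v)+b(w)−n)`; the term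
with `k = 0` vanishes since its factor `k/n` is `0`.) -/
theorem permExpMI_eq_hypergeom_sum {n : ℕ} (hn : 0 < n) {α β : Type*}
    [Fintype α] [DecidableEq α] [Fintype β] [DecidableEq β]
    (x : Fin n → α) (y : Fin n → β) :
    permExpMI x y =
      ∑ v : α, ∑ w : β,
        ∑ k ∈ Finset.Icc (margCount x v + margCount y w - n)
            (min (margCount x v) (margCount y w)),
          ((Nat.choose (margCount y w) k *
              Nat.choose (n - margCount y w) (margCount x v - k) : ℝ) /
            (Nat.choose n (margCount x v) : ℝ)) *
            ((k : ℝ) / n) *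
            Real.log (((k : ℝ) * n) / ((margCount x v : ℝ) * (margCount y w : ℝ))) := by
  classical
  have swap : ∀ (T : Equiv.Perm (Fin n) → α → β → ℝ),
      ∑ σ : Equiv.Perm (Fin n), ∑ v : α, ∑ w : β, T σ v w
        = ∑ v : α, ∑ w : β, ∑ σ : Equiv.Perm (Fin n), T σ v w := by
    intro T
    rw [Finset.sum_comm]
    exact Finset.sum_congr rfl fun v _ => Finset.sum_comm
  unfold permExpMI empMI
  simp only [Function.comp_apply]
  rw [swap (fun σ v w =>
    (((univ.filter fun t => x t = v ∧ y (σ t) = w).card : ℝ) / n) *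
      Real.log ((((univ.filter fun t => x t = v ∧ y (σ t) = w).card : ℝ) * n) /
        (((univ.filter fun t => x t = v).card : ℝ) *
          ((univ.filter fun t => y (σ t) = w).card : ℝ)))), Finset.mul_sum]
  refine Finset.sum_congr rfl fun v _ => ?_
  rw [Finset.mul_sum]
  refine Finset.sum_congr rfl fun w _ => ?_
  simpa only [margCount] using permMI_inner_sum hn x y v w
end

section
/- Let n > 0 and let α, β be finite types with decidable equality. Let x : Fin n → α and y : Fin n → β, and suppose the empirical entropy Ĥ(y) is strictly positive. Then the reliable fraction of information is bounded above by one: F̂₀(x;y) = (Î(x,y) − m̂₀(x,y)) / Ĥ(y) ≤ 1. -/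
open Finset

/-- Empirical entropy `Ĥ(y) = −Σ_w (b(w)/n)·log(b(w)/n)`, terms with `b(w)=0` being `0`. -/
noncomputable def empEntropy {n : ℕ} {β : Type*} [Fintype β] [DecidableEq β]
    (y : Fin n → β) : ℝ :=
  -∑ w : β, (((univ.filter fun t => y t = w).card : ℝ) / n) *
      Real.log (((univ.filter fun t => y t = w).card : ℝ) / n)

/- ### Auxiliary lemmas -/

lemma sum_fiber_card {n : ℕ} {α β : Type*} [Fintype α] [DecidableEq α]
    [Fintype β] [DecidableEq β] (x : Fin n → α) (y : Fin n → β) (w : β) :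
    ∑ v : α, (univ.filter fun t => x t = v ∧ y t = w).card
      = (univ.filter fun t => y t = w).card := by
  have h := Finset.card_eq_sum_card_fiberwise (f := x)
    (s := (univ.filter fun t => y t = w)) (t := (univ : Finset α))
    (fun t _ => mem_univ (x t))
  rw [h]
  refine Finset.sum_congr rfl fun v _ => ?_
  congr 1
  rw [Finset.filter_filter]
  exact Finset.filter_congr (fun t _ => by tauto)

lemma sum_marg_x {n : ℕ} {α : Type*} [Fintype α] [DecidableEq α] (x : Fin n → α) :
    ∑ v : α, (univ.filter fun t => x t = v).card = n := by
  have h := Finset.card_eq_sum_card_fiberwise (f := x)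
    (s := (univ : Finset (Fin n))) (t := (univ : Finset α))
    (fun t _ => mem_univ (x t))
  rw [← h]
  simp

lemma card_le_left {n : ℕ} {α β : Type*} [Fintype α] [DecidableEq α]
    [Fintype β] [DecidableEq β] (x : Fin n → α) (y : Fin n → β) (v : α) (w : β) :
    ((univ.filter fun t => x t = v ∧ y t = w).card : ℝ)
      ≤ ((univ.filter fun t => x t = v).card : ℝ) := by
  exact_mod_cast Finset.card_le_card
    (fun t ht => by simp only [mem_filter] at *; tauto)

lemma card_le_right {n : ℕ} {α β : Type*} [Fintype α] [DecidableEq α]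
    [Fintype β] [DecidableEq β] (x : Fin n → α) (y : Fin n → β) (v : α) (w : β) :
    ((univ.filter fun t => x t = v ∧ y t = w).card : ℝ)
      ≤ ((univ.filter fun t => y t = w).card : ℝ) := by
  exact_mod_cast Finset.card_le_card
    (fun t ht => by simp only [mem_filter] at *; tauto)

lemma empMI_le_empEntropy {n : ℕ} (hn : 0 < n) {α β : Type*}
    [Fintype α] [DecidableEq α] [Fintype β] [DecidableEq β]
    (x : Fin n → α) (y : Fin n → β) : empMI x y ≤ empEntropy y := by
  have hn' : (0:ℝ) < n := Nat.cast_pos.mpr hn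
  have log_split : ∀ {c a b : ℝ}, c ≤ a → c ≤ b → 0 ≤ c →
      (c/(n:ℝ)) * Real.log ((c*n)/(a*b))
        = (c/n)*Real.log (c/a) - (c/n)*Real.log (b/n) := by
    intro c a b hca hcb hc
    rcases eq_or_lt_of_le hc with h|h
    · simp [← h]
    · have ha : 0 < a := lt_of_lt_of_le h hca
      have hb : 0 < b := lt_of_lt_of_le h hcb
      rw [Real.log_div (by positivity) (by positivity),
        Real.log_mul h.ne' hn'.ne', Real.log_mul ha.ne' hb.ne',
        Real.log_div h.ne' ha.ne', Real.log_div hb.ne' hn'.ne']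
      ring
  have hrw : empMI x y =
      (∑ v : α, ∑ w : β, (((univ.filter fun t => x t = v ∧ y t = w).card : ℝ)/n) *
          Real.log (((univ.filter fun t => x t = v ∧ y t = w).card : ℝ) /
            ((univ.filter fun t => x t = v).card : ℝ)))
      - ∑ v : α, ∑ w : β, (((univ.filter fun t => x t = v ∧ y t = w).card : ℝ)/n) *
          Real.log (((univ.filter fun t => y t = w).card : ℝ)/n) := by
    rw [← Finset.sum_sub_distrib]
    refine Finset.sum_congr rfl fun v _ => ?_
    rw [← Finset.sum_sub_distrib]
    refine Finset.sum_congr rfl fun w _ => ?_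
    exact log_split (card_le_left x y v w) (card_le_right x y v w) (by positivity)
  have h2 : ∑ v : α, ∑ w : β, (((univ.filter fun t => x t = v ∧ y t = w).card : ℝ)/n) *
        Real.log (((univ.filter fun t => y t = w).card : ℝ)/n) = - empEntropy y := by
    rw [Finset.sum_comm]
    rw [empEntropy, neg_neg]
    refine Finset.sum_congr rfl fun w _ => ?_
    rw [← Finset.sum_mul, ← Finset.sum_div]
    congr 2
    exact_mod_cast sum_fiber_card x y w
  have h1 : (∑ v : α, ∑ w : β, (((univ.filter fun t => x t = v ∧ y t = w).card : ℝ)/n) *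
        Real.log (((univ.filter fun t => x t = v ∧ y t = w).card : ℝ) /
          ((univ.filter fun t => x t = v).card : ℝ))) ≤ 0 := by
    refine Finset.sum_nonpos fun v _ => Finset.sum_nonpos fun w _ => ?_
    refine mul_nonpos_iff.mpr (Or.inl ⟨by positivity, ?_⟩)
    refine Real.log_nonpos (by positivity) ?_
    exact div_le_one_of_le₀ (card_le_left x y v w) (by positivity)
  rw [hrw, h2]
  linarith

lemma empMI_nonneg {n : ℕ} (hn : 0 < n) {α β : Type*}
    [Fintype α] [DecidableEq α] [Fintype β] [DecidableEq β]
    (x : Fin n → α) (y : Fin n → β) : 0 ≤ empMI x y := by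
  have hn' : (0:ℝ) < n := Nat.cast_pos.mpr hn
  rw [← neg_nonpos, empMI]
  simp only [← Finset.sum_neg_distrib]
  have key : ∀ v w,
      -(((( univ.filter fun t => x t = v ∧ y t = w).card : ℝ)/n) *
        Real.log (((( univ.filter fun t => x t = v ∧ y t = w).card : ℝ) * n) /
          (((univ.filter fun t => x t = v).card : ℝ) *
            ((univ.filter fun t => y t = w).card : ℝ))))
      ≤ ((univ.filter fun t => x t = v).card : ℝ) *
          ((univ.filter fun t => y t = w).card : ℝ) / (n*n)
        - ((univ.filter fun t => x t = v ∧ y t = w).card : ℝ)/n := by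
    intro v w
    set c : ℝ := ((univ.filter fun t => x t = v ∧ y t = w).card : ℝ) with hc
    set a : ℝ := ((univ.filter fun t => x t = v).card : ℝ) with ha
    set b : ℝ := ((univ.filter fun t => y t = w).card : ℝ) with hb
    have hc0 : 0 ≤ c := by positivity
    rcases eq_or_lt_of_le hc0 with h|h
    · rw [← h]; simp; positivity
    · have hca : c ≤ a := card_le_left x y v w
      have hcb : c ≤ b := card_le_right x y v w
      have haa : 0 < a := lt_of_lt_of_le h hca
      have hbb : 0 < b := lt_of_lt_of_le h hcb
      have hlog : Real.log ((a*b)/(c*n)) ≤ (a*b)/(c*n) - 1 :=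
        Real.log_le_sub_one_of_pos (by positivity)
      have hflip : -((c/n) * Real.log ((c*n)/(a*b))) = (c/n) * Real.log ((a*b)/(c*n)) := by
        have hli : Real.log ((a*b)/(c*n)) = -Real.log ((c*n)/(a*b)) := by
          rw [← Real.log_inv, inv_div]
        rw [hli]; ring
      rw [hflip]
      have hmul : (c/n) * ((a*b)/(c*n) - 1) = a*b/(n*n) - c/n := by
        field_simp
      calc (c/n) * Real.log ((a*b)/(c*n)) ≤ (c/n) * ((a*b)/(c*n) - 1) := by
            apply mul_le_mul_of_nonneg_left hlog (by positivity)
        _ = a*b/(n*n) - c/n := hmul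
  calc ∑ v : α, ∑ w : β,
        -(((( univ.filter fun t => x t = v ∧ y t = w).card : ℝ)/n) *
          Real.log (((( univ.filter fun t => x t = v ∧ y t = w).card : ℝ) * n) /
            (((univ.filter fun t => x t = v).card : ℝ) *
              ((univ.filter fun t => y t = w).card : ℝ))))
      ≤ ∑ v : α, ∑ w : β,
          (((univ.filter fun t => x t = v).card : ℝ) *
            ((univ.filter fun t => y t = w).card : ℝ) / (n*n)
          - ((univ.filter fun t => x t = v ∧ y t = w).card : ℝ)/n) := by
        exact Finset.sum_le_sum fun v _ => Finset.sum_le_sum fun w _ => key v w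
    _ = 0 := by
        have hA : ∑ v : α, ((univ.filter fun t => x t = v).card : ℝ) = n := by
          exact_mod_cast sum_marg_x x
        have hB : ∑ w : β, ((univ.filter fun t => y t = w).card : ℝ) = n := by
          exact_mod_cast sum_marg_x y
        have hC : ∀ w : β, ∑ v : α, ((univ.filter fun t => x t = v ∧ y t = w).card : ℝ)
            = ((univ.filter fun t => y t = w).card : ℝ) := fun w => by
          exact_mod_cast sum_fiber_card x y w
        have hprodsum : ∑ v : α, ∑ w : β,
            (((univ.filter fun t => x t = v).card : ℝ) *
              ((univ.filter fun t => y t = w).card : ℝ)) = (n:ℝ)*(n:ℝ) := by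
          rw [← Finset.sum_mul_sum, hA, hB]
        have hcsum : ∑ v : α, ∑ w : β,
            ((univ.filter fun t => x t = v ∧ y t = w).card : ℝ) = (n:ℝ) := by
          rw [Finset.sum_comm]
          rw [Finset.sum_congr rfl fun w (_ : w ∈ univ) => hC w]
          exact hB
        simp only [Finset.sum_sub_distrib, ← Finset.sum_div]
        rw [hprodsum, hcsum]
        field_simp
        norm_num

/-- The reliable fraction of information `F̂₀(x;y) = (Î(x,y) − m̂₀(x,y))/Ĥ(y)` is bounded
above by one whenever `Ĥ(y) > 0`. -/
theorem reliableFraction_le_one {n : ℕ} (hn : 0 < n) {α β : Type*}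
    [Fintype α] [DecidableEq α] [Fintype β] [DecidableEq β]
    (x : Fin n → α) (y : Fin n → β) (hH : 0 < empEntropy y) :
    (empMI x y - permExpMI x y) / empEntropy y ≤ 1 := by
  have hm : 0 ≤ permExpMI x y := by
    rw [permExpMI]
    have h1 : 0 ≤ ∑ σ : Equiv.Perm (Fin n), empMI x (y ∘ σ) :=
      Finset.sum_nonneg fun σ _ => empMI_nonneg hn x (y ∘ σ)
    positivity
  have hle : empMI x y ≤ empEntropy y := empMI_le_empEntropy hn x y
  rw [div_le_one hH]
  linarith
end
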